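/- Let φ, ψ be strategy-proof mechanisms, i, j agents with strict-order domains over finite sets A_i, A_j of equal size m, and fix deterministic opposing profiles R_{-i}, R'_{-j}, while R_i and R'_j are uniform over strict orders. Then Δ_{i|i}^φ(R_{-i}) ≥ Δ_{j|j}^ψ(R'_{-j}) if and only if the rank ρ_j^ψ(R') first-order stochastically dominates the rank ρ_i^φ(R). -/

import Mathlib

open Classical in
lemma exists_equiv_image_subset {α β : Type*} [Fintype α] [Fintype β]
    (h : Fintype.card α = Fintype.card β) (S : Set α) (T : Set β)
    (hST : S.ncard ≤ T.ncard) : ∃ e : α ≃ β, ∀ a ∈ S, e a ∈ T := by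
  obtain ⟨S', hS'T, hcard⟩ := Set.exists_subset_card_eq hST
  have hcards : Fintype.card ↥S = Fintype.card ↥S' := by
    rw [← Nat.card_eq_fintype_card, ← Nat.card_eq_fintype_card,
      Nat.card_coe_set_eq, Nat.card_coe_set_eq, hcard]
  have hcardc : Fintype.card ↥Sᶜ = Fintype.card ↥S'ᶜ := by
    rw [Fintype.card_compl_set, Fintype.card_compl_set, h, hcards]
  refine ⟨(Equiv.sumCompl (· ∈ S)).symm.trans
    (((Fintype.equivOfCardEq hcards).sumCongr (Fintype.equivOfCardEq hcardc)).trans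
      (Equiv.sumCompl (· ∈ S'))), fun a ha => ?_⟩
  have := Equiv.sumCompl_symm_apply_of_pos (p := (· ∈ S)) ha
  simp only [Equiv.trans_apply, this, Equiv.sumCongr_apply, Sum.map_inl,
    Equiv.sumCompl_apply_inl]
  exact hS'T (Fintype.equivOfCardEq hcards ⟨a, ha⟩).2

lemma count_le {α β : Type*} [Fintype α] [Fintype β] (m : ℕ)
    (hα : Fintype.card α = m) (hβ : Fintype.card β = m)
    (S : Set α) (T : Set β) (hST : T.ncard ≤ S.ncard) (r : ℕ) :
    Nat.card {σ : α ≃ Fin m // ∀ a ∈ S, r ≤ (σ a : ℕ)} ≤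
      Nat.card {τ : β ≃ Fin m // ∀ b ∈ T, r ≤ (τ b : ℕ)} := by
  obtain ⟨e, he⟩ := exists_equiv_image_subset (hβ.trans hα.symm) T S hST
  refine Nat.card_le_card_of_injective
    (fun σ => ⟨e.trans σ.1, fun b hb => σ.2 _ (he b hb)⟩) ?_
  intro σ σ' hss
  have h1 : e.trans σ.1 = e.trans σ'.1 := congrArg Subtype.val hss
  have h2 : σ.1 = σ'.1 := by
    refine Equiv.ext fun a => ?_
    have := congrArg (fun q : β ≃ Fin m => q (e.symm a)) h1
    simpa using this
  exact Subtype.ext h2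

lemma ncard_Iic (m : ℕ) (c : Fin m) :
    Set.ncard {i : Fin m | (i : ℕ) ≤ (c : ℕ)} = c + 1 := by
  have h : {i : Fin m | (i : ℕ) ≤ (c : ℕ)} = Set.Iic c := by
    ext i; exact (Fin.le_def).symm
  rw [h, Set.ncard_eq_toFinset_card']
  simp [Fin.card_Iic]

lemma ncard_Ici (m r : ℕ) :
    Set.ncard {i : Fin m | r ≤ (i : ℕ)} = m - r := by
  by_cases hr : r < m
  · have h : {i : Fin m | r ≤ (i : ℕ)} = Set.Ici (⟨r, hr⟩ : Fin m) := by
      ext i; simp only [Set.mem_setOf_eq, Set.mem_Ici, Fin.le_def]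
    rw [h, Set.ncard_eq_toFinset_card']
    simp [Fin.card_Ici]
  · have h : {i : Fin m | r ≤ (i : ℕ)} = ∅ := by
      ext i
      simp only [Set.mem_setOf_eq, Set.mem_empty_iff_false, iff_false, not_le]
      exact lt_of_lt_of_le i.2 (not_lt.mp hr)
    rw [h, Set.ncard_empty]
    omega

lemma rank_iff {α : Type*} [Fintype α] {m : ℕ}
    (f : (α ≃ Fin m) → α) (hf : ∀ (σ : α ≃ Fin m) (a : α), a ∈ Set.range f → (σ (f σ) : ℕ) ≤ σ a)
    (σ : α ≃ Fin m) (r : ℕ) :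
    r < Set.ncard {x : α | (σ x : ℕ) ≤ σ (f σ)} ↔ ∀ a ∈ Set.range f, r ≤ (σ a : ℕ) := by
  have himg : σ '' {x : α | (σ x : ℕ) ≤ σ (f σ)} = {i : Fin m | (i : ℕ) ≤ σ (f σ)} := by
    ext i
    constructor
    · rintro ⟨x, hx, rfl⟩; exact hx
    · intro hi; exact ⟨σ.symm i, by simpa using hi, by simp⟩
  have hnc : Set.ncard {x : α | (σ x : ℕ) ≤ σ (f σ)} = (σ (f σ) : ℕ) + 1 := by
    rw [← Set.ncard_image_of_injective _ σ.injective, himg, ncard_Iic]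
  rw [hnc]
  constructor
  · rintro h a ⟨τ, rfl⟩
    exact le_trans (Nat.lt_succ_iff.mp h) (hf σ (f τ) ⟨τ, rfl⟩)
  · intro h
    exact Nat.lt_succ_of_le (h (f σ) ⟨σ, rfl⟩)

lemma count_eq_zero {β : Type*} [Fintype β] {m : ℕ} (_hβ : Fintype.card β = m)
    (T : Set β) (r : ℕ) (h : m - r < T.ncard) :
    Nat.card {τ : β ≃ Fin m // ∀ b ∈ T, r ≤ (τ b : ℕ)} = 0 := by
  rw [Nat.card_eq_zero]
  left
  refine ⟨fun x => ?_⟩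
  obtain ⟨τ, hτ⟩ := x
  have h1 : τ '' T ⊆ {i : Fin m | r ≤ (i : ℕ)} := by
    rintro i ⟨b, hb, rfl⟩; exact hτ b hb
  have h2 : T.ncard ≤ m - r := by
    rw [← Set.ncard_image_of_injective T τ.injective, ← ncard_Ici m r]
    exact Set.ncard_le_ncard h1 (Set.toFinite _)
  omega



/-- Let `f` and `g` be two strategy-proof mechanisms viewed as functions
of agent `i`'s (resp. `j`'s) report at fixed opposing profiles, over finite outcome
sets `A`, `B` of equal size `m`, with strict orders encoded as rankings
`σ : A ≃ Fin m` (`x R y ↔ σ x ≤ σ y`).  With the own report uniform over the `m!`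
strict orders, `Δ_{i|i} ≥ Δ_{j|j}` iff the rank `ρ_j` first-order stochastically
dominates `ρ_i`, i.e. `P[ρ_i > r] ≤ P[ρ_j > r]` for every `r`, stated via counts of
orders (both spaces having `m!` elements). -/
theorem stmt_6 {A B : Type*} [Fintype A] [Fintype B] (m : ℕ)
    (hA : Fintype.card A = m) (hB : Fintype.card B = m)
    (f : (A ≃ Fin m) → A) (g : (B ≃ Fin m) → B)
    (hf : ∀ (σ : A ≃ Fin m) (a : A), a ∈ Set.range f → (σ (f σ) : ℕ) ≤ σ a)
    (hg : ∀ (τ : B ≃ Fin m) (b : B), b ∈ Set.range g → (τ (g τ) : ℕ) ≤ τ b) :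
    Set.ncard (Set.range g) ≤ Set.ncard (Set.range f) ↔
    ∀ r : ℕ,
      Nat.card {σ : A ≃ Fin m // r < Set.ncard {x : A | (σ x : ℕ) ≤ σ (f σ)}}
        ≤ Nat.card {τ : B ≃ Fin m // r < Set.ncard {y : B | (τ y : ℕ) ≤ τ (g τ)}} := by
  have hcf : ∀ r : ℕ,
      Nat.card {σ : A ≃ Fin m // r < Set.ncard {x : A | (σ x : ℕ) ≤ σ (f σ)}}
        = Nat.card {σ : A ≃ Fin m // ∀ a ∈ Set.range f, r ≤ (σ a : ℕ)} := fun r =>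
    Nat.card_congr (Equiv.subtypeEquivRight fun σ => rank_iff f hf σ r)
  have hcg : ∀ r : ℕ,
      Nat.card {τ : B ≃ Fin m // r < Set.ncard {y : B | (τ y : ℕ) ≤ τ (g τ)}}
        = Nat.card {τ : B ≃ Fin m // ∀ b ∈ Set.range g, r ≤ (τ b : ℕ)} := fun r =>
    Nat.card_congr (Equiv.subtypeEquivRight fun τ => rank_iff g hg τ r)
  constructor
  · intro h r
    rw [hcf r, hcg r]
    exact count_le m hA hB (Set.range f) (Set.range g) h r
  · intro h
    by_contra hlt
    push_neg at hlt
    set sf := (Set.range f).ncard with hsf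
    set sg := (Set.range g).ncard with hsg
    have hsg_le : sg ≤ m := by
      have huniv : (Set.univ : Set B).ncard = m := by
        rw [Set.ncard_univ, Nat.card_eq_fintype_card, hB]
      calc sg ≤ (Set.univ : Set B).ncard :=
            Set.ncard_le_ncard (Set.subset_univ _) (Set.toFinite _)
        _ = m := huniv
    set r := m - sg + 1 with hr
    have h0 : Nat.card {τ : B ≃ Fin m // ∀ b ∈ Set.range g, r ≤ (τ b : ℕ)} = 0 :=
      count_eq_zero hB _ r (by omega)
    have hpos : 0 < Nat.card {σ : A ≃ Fin m // ∀ a ∈ Set.range f, r ≤ (σ a : ℕ)} := by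
      obtain ⟨e, he⟩ := exists_equiv_image_subset (by simp [hA])
        (Set.range f) {i : Fin m | r ≤ (i : ℕ)} (by rw [ncard_Ici]; omega)
      haveI : Nonempty {σ : A ≃ Fin m // ∀ a ∈ Set.range f, r ≤ (σ a : ℕ)} := ⟨⟨e, he⟩⟩
      exact Nat.card_pos
    have hcontr := h r
    rw [hcf r, hcg r] at hcontr
    omega
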